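/- Let (V,E) be a graph and Ψ_t a local family of stochastic linear maps on the graph. Then for every T ∈ ℕ there exist a finite coin set C of cardinality |V|·(T+1), a stochastic matrix P on C×V that is local in the lifted sense, and a coin assignment v ↦ c_v with initialization F and marginal map f, such that f(P^t F[p]) = Ψ_t[p] for every probability distribution p on V and every t with 0 ≤ t ≤ T. -/

import Mathlib

open Finset

section Defs

variable {S : Type*} [Fintype S]

/-- `p` is a probability distribution on the finite set `S`. -/
def IsProbDist (p : S → ℝ) : Prop := (∀ s, 0 ≤ p s) ∧ ∑ s, p s = 1

/-- The mass `p(X) = ∑_{s ∈ X} p s` of a subset `X`. -/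
noncomputable def mass (p : S → ℝ) (X : Set S) : ℝ := ∑ s, X.indicator p s

/-- Total variation distance `‖p - q‖_TV = (1/2) ∑_s |p s - q s|`. -/
noncomputable def tvDist (p q : S → ℝ) : ℝ := (1/2) * ∑ s, |p s - q s|

/-- A (column-)stochastic matrix `P s' s`: entries nonnegative, columns sum to one. -/
def IsStochastic (P : S → S → ℝ) : Prop :=
  (∀ s' s, 0 ≤ P s' s) ∧ ∀ s, ∑ s', P s' s = 1

/-- Action of a matrix on a distribution: `(P p)(s') = ∑_s P s' s * p s`. -/
def matVec (P : S → S → ℝ) (p : S → ℝ) : S → ℝ := fun s' => ∑ s, P s' s * p s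

open scoped Classical in
/-- Ergodic flow `Q_P(Xᶜ, X) = ∑_{s ∈ X, s' ∉ X} P s' s * pbar s`. -/
noncomputable def ergFlow (P : S → S → ℝ) (pbar : S → ℝ) (X : Set S) : ℝ :=
  ∑ s, ∑ s', if s ∈ X ∧ s' ∉ X then P s' s * pbar s else 0

/-- Bottleneck ratio `Φ_X(P) = Q_P(Xᶜ,X) / pbar(X)`. -/
noncomputable def bottleneck (P : S → S → ℝ) (pbar : S → ℝ) (X : Set S) : ℝ :=
  ergFlow P pbar X / mass pbar X

/-- The distribution `pbar` conditioned on the set `X`. -/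
noncomputable def condDist (pbar : S → ℝ) (X : Set S) : S → ℝ :=
  X.indicator (fun s => pbar s / mass pbar X)

/-- Conductance `Φ(P) = min { Φ_X(P) : 0 < pbar(X) ≤ 1/2 }`. -/
noncomputable def conductance (P : S → S → ℝ) (pbar : S → ℝ) : ℝ :=
  sInf {r | ∃ X : Set S, 0 < mass pbar X ∧ mass pbar X ≤ 1/2 ∧ r = bottleneck P pbar X}

end Defs

section Graph

variable {V : Type*} [Fintype V]

/-- Neighborhood `B(X) = {v ∉ X : (v,v') ∈ E for some v' ∈ X}`. -/
def nbhd (E : V → V → Prop) (X : Set V) : Set V :=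
  {v | v ∉ X ∧ ∃ v' ∈ X, E v v'}

/-- A matrix on `V` is local w.r.t. the graph: `P v' v = 0` whenever `(v,v') ∉ E`. -/
def IsLocalMatrix (E : V → V → Prop) (P : V → V → ℝ) : Prop :=
  ∀ v' v, ¬ E v v' → P v' v = 0

/-- Graph conductance `Φ_pbar`: supremum of `Φ(P)` over local stochastic `P` fixing `pbar`. -/
noncomputable def graphConductance (E : V → V → Prop) (pbar : V → ℝ) : ℝ :=
  sSup {r | ∃ P : V → V → ℝ, IsStochastic P ∧ IsLocalMatrix E P ∧
    matVec P pbar = pbar ∧ r = conductance P pbar}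

/-- A family of stochastic linear maps is local w.r.t. the graph. -/
def IsLocalFamily (E : V → V → Prop) (Ψ : ℕ → (V → ℝ) →ₗ[ℝ] (V → ℝ)) : Prop :=
  ∀ (X : Set V) (p₀ : V → ℝ), IsProbDist p₀ → ∀ t : ℕ,
    mass (Ψ (t+1) p₀) X ≤ mass (Ψ t p₀) X + mass (Ψ t p₀) (nbhd E X)

end Graph

section Lift

variable {C V : Type*} [Fintype C] [Fintype V]

/-- A stochastic matrix on the lifted space `C × V` is local in the lifted sense. -/
def IsLocalLift (E : V → V → Prop) (P : C × V → C × V → ℝ) : Prop :=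
  ∀ c' v' c v, ¬ E v v' → P (c', v') (c, v) = 0

open scoped Classical in
/-- Initialization `F[p](c,v) = p v` if `c = ca v`, else `0`. -/
noncomputable def liftInit (ca : V → C) (p : V → ℝ) : C × V → ℝ :=
  fun x => if x.1 = ca x.2 then p x.2 else 0

/-- Marginal map `f(p̂)(v) = ∑_c p̂(c,v)`. -/
def margDist (phat : C × V → ℝ) : V → ℝ := fun v => ∑ c, phat (c, v)

/-- Induced chain on `V` of a lifted chain `P` with stationary distribution `phat`. -/
noncomputable def inducedChain (P : C × V → C × V → ℝ) (phat : C × V → ℝ) : V → V → ℝ :=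
  fun v' v => ∑ c, ∑ c', (phat (c, v) / margDist phat v) * P (c', v') (c, v)

end Lift


section Aux
open MeasureTheory


/-- Finite first-order stochastic dominance. -/
lemma dominance {V : Type} [Fintype V] (h g r s : V → ℝ)
    (hr : ∀ v, 0 ≤ r v) (hs : ∀ v, 0 ≤ s v) (hsum : ∑ v, r v = ∑ v, s v)
    (hlev : ∀ θ : ℝ, ∑ v ∈ univ.filter (fun v => θ < h v), r v
      ≤ ∑ v ∈ univ.filter (fun v => θ < g v), s v) :
    ∑ v, h v * r v ≤ ∑ v, g v * s v := by
  classical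
  rcases isEmpty_or_nonempty V with hV | hV
  · simp
  -- choose c below all values
  obtain ⟨c, hc⟩ : ∃ c : ℝ, ∀ v, c ≤ h v ∧ c ≤ g v := by
    obtain ⟨w, -, hw⟩ := Finset.exists_min_image (univ : Finset V)
      (fun v => min (h v) (g v)) ⟨Classical.arbitrary V, mem_univ _⟩
    exact ⟨min (h w) (g w), fun v => ⟨le_trans (hw v (mem_univ v)) (min_le_left _ _),
      le_trans (hw v (mem_univ v)) (min_le_right _ _)⟩⟩
  have key : ∀ (h : V → ℝ) (r : V → ℝ), (∀ v, 0 ≤ r v) → (∀ v, c ≤ h v) →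
      ∑ v, (h v - c) * r v = ∫ θ : ℝ, ∑ v, (Set.Ico c (h v)).indicator (fun _ => r v) θ := by
    intro h r hr hch
    have hint : ∀ v : V, Integrable ((Set.Ico c (h v)).indicator (fun _ : ℝ => r v)) := by
      intro v
      rw [integrable_indicator_iff measurableSet_Ico]
      exact integrableOn_const (by simp [Real.volume_Ico, ENNReal.ofReal_lt_top])
    rw [integral_finset_sum _ (fun v _ => hint v)]
    refine Finset.sum_congr rfl fun v _ => ?_
    rw [integral_indicator_const (r v) measurableSet_Ico, measureReal_def, Real.volume_Ico,
      ENNReal.toReal_ofReal (by linarith [hch v])]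
    simp [mul_comm]
  have hch : ∀ v, c ≤ h v := fun v => (hc v).1
  have hcg : ∀ v, c ≤ g v := fun v => (hc v).2
  have hintf : ∀ (h : V → ℝ) (r : V → ℝ),
      Integrable (fun θ : ℝ => ∑ v, (Set.Ico c (h v)).indicator (fun _ => r v) θ) := by
    intro h r
    refine integrable_finset_sum _ (fun v _ => ?_)
    rw [integrable_indicator_iff measurableSet_Ico]
    exact integrableOn_const (by simp [Real.volume_Ico, ENNReal.ofReal_lt_top])
  have hmono : (fun θ : ℝ => ∑ v, (Set.Ico c (h v)).indicator (fun _ => r v) θ)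
      ≤ (fun θ : ℝ => ∑ v, (Set.Ico c (g v)).indicator (fun _ => s v) θ) := by
    intro θ
    dsimp only
    by_cases hθ : c ≤ θ
    · have e1 : ∀ (h : V → ℝ) (r : V → ℝ), ∑ v, (Set.Ico c (h v)).indicator (fun _ : ℝ => r v) θ
          = ∑ v ∈ univ.filter (fun v => θ < h v), r v := by
        intro h r
        rw [Finset.sum_filter]
        refine Finset.sum_congr rfl fun v _ => ?_
        simp only [Set.indicator_apply, Set.mem_Ico]
        by_cases hv : θ < h v <;> simp [hv, hθ]
      rw [e1 h r, e1 g s]; exact hlev θ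
    · have e0 : ∀ (h : V → ℝ) (r : V → ℝ), ∑ v, (Set.Ico c (h v)).indicator (fun _ : ℝ => r v) θ
          = 0 := by
        intro h r
        refine Finset.sum_eq_zero fun v _ => ?_
        simp [Set.indicator_apply, Set.mem_Ico, hθ]
      rw [e0 h r, e0 g s]
  have := integral_mono (hintf h r) (hintf g s) hmono
  rw [← key h r hr hch, ← key g s hs hcg] at this
  have expand : ∀ (h : V → ℝ) (r : V → ℝ),
      ∑ v, (h v - c) * r v = ∑ v, h v * r v - c * ∑ v, r v := by
    intro h r
    rw [Finset.mul_sum, ← Finset.sum_sub_distrib]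
    exact Finset.sum_congr rfl fun v _ => by ring
  rw [expand h r, expand g s, hsum] at this
  linarith


/-- Existence of a local transport plan between two distributions, given the
Hall-type condition. -/
lemma transport_exists {V : Type} [Fintype V] (E : V → V → Prop) (hloop : ∀ v, E v v)
    (p p' : V → ℝ) (hp : IsProbDist p) (hp' : IsProbDist p')
    (hall : ∀ X : Set V, mass p' X ≤ mass p {v | ∃ v' ∈ X, E v v'}) :
    ∃ π : V → V → ℝ, (∀ v' v, 0 ≤ π v' v) ∧ (∀ v' v, ¬ E v v' → π v' v = 0) ∧
      (∀ v, ∑ v', π v' v = p v) ∧ (∀ v', ∑ v, π v' v = p' v') := by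
  classical
  set A : Set (V × V → ℝ) := {F | (∀ a, 0 ≤ F a) ∧ (∀ a : V × V, ¬ E a.2 a.1 → F a = 0) ∧
    ∀ v, ∑ v', F (v', v) = p v} with hA
  set rowM : (V × V → ℝ) →ₗ[ℝ] (V → ℝ) :=
    { toFun := fun F v' => ∑ v, F (v', v)
      map_add' := by intro F G; funext v'; simp [Finset.sum_add_distrib]
      map_smul' := by intro c F; funext v'; simp [Finset.mul_sum] } with hrowM
  set K : Set (V → ℝ) := rowM '' A with hK
  suffices hmem : p' ∈ K by
    obtain ⟨F, ⟨h1, h2, h3⟩, h4⟩ := hmem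
    exact ⟨fun v' v => F (v', v), fun v' v => h1 _, fun v' v h => h2 _ h, h3,
      fun v' => congrFun h4 v'⟩
  by_contra hmem
  -- K is convex, compact, closed
  have hAconv : Convex ℝ A := by
    intro F hF G hG a b ha hb hab
    refine ⟨fun x => add_nonneg (mul_nonneg ha (hF.1 x)) (mul_nonneg hb (hG.1 x)),
      fun x hx => by simp [hF.2.1 x hx, hG.2.1 x hx], fun v => ?_⟩
    simp only [Pi.add_apply, Pi.smul_apply, smul_eq_mul]
    rw [Finset.sum_add_distrib, ← Finset.mul_sum, ← Finset.mul_sum, hF.2.2 v, hG.2.2 v]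
    nlinarith [hp.1 v]
  have hAclosed : IsClosed A := by
    have h1 : IsClosed {F : V × V → ℝ | ∀ a, 0 ≤ F a} := by
      have : {F : V × V → ℝ | ∀ a, 0 ≤ F a} = ⋂ a, {F | 0 ≤ F a} := by
        ext F; simp [Set.mem_iInter]
      rw [this]
      exact isClosed_iInter fun a => isClosed_le continuous_const (continuous_apply a)
    have h2 : IsClosed {F : V × V → ℝ | ∀ a : V × V, ¬ E a.2 a.1 → F a = 0} := by
      have : {F : V × V → ℝ | ∀ a : V × V, ¬ E a.2 a.1 → F a = 0}
          = ⋂ a, {F | ¬ E a.2 a.1 → F a = 0} := by ext F; simp [Set.mem_iInter]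
      rw [this]
      refine isClosed_iInter fun a => ?_
      by_cases hEa : E a.2 a.1
      · have : {F : V × V → ℝ | ¬ E a.2 a.1 → F a = 0} = Set.univ := by
          ext F; simp [hEa]
        rw [this]; exact isClosed_univ
      · have : {F : V × V → ℝ | ¬ E a.2 a.1 → F a = 0} = {F | F a = 0} := by
          ext F; simp [hEa]
        rw [this]; exact isClosed_eq (continuous_apply a) continuous_const
    have h3 : IsClosed {F : V × V → ℝ | ∀ v, ∑ v', F (v', v) = p v} := by
      have : {F : V × V → ℝ | ∀ v, ∑ v', F (v', v) = p v}
          = ⋂ v, {F | ∑ v', F (v', v) = p v} := by ext F; simp [Set.mem_iInter]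
      rw [this]
      exact isClosed_iInter fun v => isClosed_eq
        (continuous_finset_sum _ fun v' _ => continuous_apply _) continuous_const
    have : A = {F : V × V → ℝ | ∀ a, 0 ≤ F a}
        ∩ ({F : V × V → ℝ | ∀ a : V × V, ¬ E a.2 a.1 → F a = 0}
          ∩ {F : V × V → ℝ | ∀ v, ∑ v', F (v', v) = p v}) := by
      ext F; simp only [hA, Set.mem_setOf_eq, Set.mem_inter_iff]
    rw [this]
    exact h1.inter (h2.inter h3)
  have hple1 : ∀ v, p v ≤ 1 := by
    intro v
    rw [← hp.2]
    exact Finset.single_le_sum (fun i _ => hp.1 i) (Finset.mem_univ v)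
  have hAbdd : A ⊆ Metric.closedBall 0 1 := by
    intro F hF
    rw [Metric.mem_closedBall, dist_zero_right]
    rw [pi_norm_le_iff_of_nonneg zero_le_one]
    intro a
    rw [Real.norm_eq_abs, abs_le]
    constructor
    · linarith [hF.1 a]
    · calc F a ≤ ∑ v', F (v', a.2) :=
          Finset.single_le_sum (fun v' _ => hF.1 (v', a.2)) (Finset.mem_univ a.1)
      _ = p a.2 := hF.2.2 a.2
      _ ≤ 1 := hple1 a.2
  have hAcomp : IsCompact A :=
    Metric.isCompact_of_isClosed_isBounded hAclosed
      (Metric.isBounded_closedBall.subset hAbdd)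
  have hKcomp : IsCompact K := hAcomp.image rowM.continuous_of_finiteDimensional
  have hKclosed : IsClosed K := hKcomp.isClosed
  have hKconv : Convex ℝ K := hAconv.linear_image rowM
  obtain ⟨f, u, hfa, hfp⟩ := geometric_hahn_banach_closed_point hKconv hKclosed hmem
  set φ : V → ℝ := fun v => f (Pi.single v 1) with hφ
  have hfrep : ∀ q : V → ℝ, f q = ∑ v, q v * φ v := by
    intro q
    have hq : q = ∑ v, q v • (Pi.single v (1 : ℝ) : V → ℝ) := by
      funext x
      simp only [Finset.sum_apply, Pi.smul_apply, Pi.single_apply, smul_eq_mul,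
        mul_ite, mul_one, mul_zero]
      simp
    conv_lhs => rw [hq]
    rw [map_sum]
    exact Finset.sum_congr rfl fun v _ => by rw [f.map_smul]; simp [hφ]
  -- V is nonempty since p' is a distribution
  have hVne : Nonempty V := by
    by_contra hV
    have := hp'.2
    rw [Finset.sum_eq_zero (fun v _ => absurd ⟨v⟩ hV)] at this
    norm_num at this
  -- greedy choice
  set nbrs : V → Finset V := fun v => Finset.univ.filter fun v' => E v v' with hnbrs
  have hne : ∀ v, (nbrs v).Nonempty := fun v => ⟨v, by simp [hnbrs, hloop v]⟩
  set g : V → ℝ := fun v => (nbrs v).sup' (hne v) φ with hg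
  choose ch hch1 hch2 using fun v => Finset.exists_mem_eq_sup' (hne v) φ
  set F₀ : V × V → ℝ := fun a => if a.1 = ch a.2 then p a.2 else 0 with hF₀
  have hF₀A : F₀ ∈ A := by
    refine ⟨fun a => ?_, ?_, ?_⟩
    · simp only [hF₀]
      split
      · exact hp.1 a.2
      · exact le_rfl
    · intro a ha
      simp only [hF₀]
      split
      · next heq =>
          exfalso
          apply ha
          rw [heq]
          have := hch1 a.2
          simp [hnbrs] at this
          exact this
      · rfl
    · intro v
      simp [hF₀, Finset.sum_ite_eq']
  have hb₀K : rowM F₀ ∈ K := ⟨F₀, hF₀A, rfl⟩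
  have hfb₀ : f (rowM F₀) = ∑ v, p v * g v := by
    rw [hfrep]
    have : ∀ v', (rowM F₀) v' = ∑ v, F₀ (v', v) := fun v' => rfl
    calc ∑ v', (rowM F₀) v' * φ v' = ∑ v', ∑ v, F₀ (v', v) * φ v' := by
          refine Finset.sum_congr rfl fun v' _ => ?_
          rw [this v', Finset.sum_mul]
      _ = ∑ v, ∑ v', F₀ (v', v) * φ v' := Finset.sum_comm
      _ = ∑ v, p v * g v := by
          refine Finset.sum_congr rfl fun v _ => ?_
          simp only [hF₀, ite_mul, zero_mul]
          rw [Finset.sum_ite_eq' Finset.univ (ch v) (fun v' => p v * φ v')]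
          simp [hg, ← hch2 v]
  -- dominance
  have hdom : ∑ v, φ v * p' v ≤ ∑ v, g v * p v := by
    refine dominance φ g p' p hp'.1 hp.1 (by rw [hp'.2, hp.2]) fun θ => ?_
    have h1 : ∑ v ∈ Finset.univ.filter (fun v => θ < φ v), p' v
        = mass p' {v | θ < φ v} := by
      rw [mass, Finset.sum_filter]
      refine Finset.sum_congr rfl fun v _ => ?_
      rw [Set.indicator_apply]
      simp only [Set.mem_setOf_eq]
    have h2 : ∑ v ∈ Finset.univ.filter (fun v => θ < g v), p v
        = mass p {v | ∃ v' ∈ {w | θ < φ w}, E v v'} := by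
      rw [mass, Finset.sum_filter]
      refine Finset.sum_congr rfl fun v _ => ?_
      rw [Set.indicator_apply]
      have : v ∈ {v | ∃ v' ∈ {w | θ < φ w}, E v v'} ↔ θ < g v := by
        simp only [Set.mem_setOf_eq, hg, Finset.lt_sup'_iff, hnbrs, Finset.mem_filter,
          Finset.mem_univ, true_and]
        tauto
      simp only [this]
    rw [h1, h2]
    exact hall {w | θ < φ w}
  have hlt1 : f (rowM F₀) < u := hfa _ hb₀K
  have hlt2 : u < f p' := hfp
  rw [hfrep p'] at hlt2
  rw [hfb₀] at hlt1
  have e1 : ∑ v, φ v * p' v = ∑ v, p' v * φ v :=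
    Finset.sum_congr rfl fun v _ => mul_comm _ _
  have e2 : ∑ v, g v * p v = ∑ v, p v * g v :=
    Finset.sum_congr rfl fun v _ => mul_comm _ _
  rw [e1, e2] at hdom
  linarith
end Aux


/-- Turn a transport plan into a local stochastic matrix mapping `p` to `p'`. -/
lemma step_matrix {V : Type} [Fintype V] (E : V → V → Prop) (hloop : ∀ v, E v v)
    (p p' : V → ℝ) (hp : IsProbDist p) (hp' : IsProbDist p')
    (hall : ∀ X : Set V, mass p' X ≤ mass p {v | ∃ v' ∈ X, E v v'}) :
    ∃ M : V → V → ℝ, IsStochastic M ∧ IsLocalMatrix E M ∧ matVec M p = p' := by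
  classical
  obtain ⟨π, hπ0, hπE, hcol, hrow⟩ := transport_exists E hloop p p' hp hp' hall
  refine ⟨fun v' v => if 0 < p v then π v' v / p v else if v' = v then 1 else 0,
    ⟨?_, ?_⟩, ?_, ?_⟩
  · intro v' v; dsimp only; split
    · exact div_nonneg (hπ0 _ _) (hp.1 v)
    · split <;> norm_num
  · intro v; dsimp only; by_cases hv : 0 < p v
    · simp only [hv, if_true]
      rw [← Finset.sum_div, hcol v, div_self (ne_of_gt hv)]
    · simp only [hv, if_false]
      simp [Finset.sum_ite_eq']
  · intro v' v hE; dsimp only; split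
    · rw [hπE v' v hE]; simp
    · split
      · next heq => exact absurd (heq ▸ hloop v) hE
      · rfl
  · funext v'
    show (∑ v, (if 0 < p v then π v' v / p v else if v' = v then 1 else 0) * p v) = p' v'
    rw [← hrow v']
    refine Finset.sum_congr rfl fun v _ => ?_
    by_cases hv : 0 < p v
    · simp only [hv, if_true]
      field_simp
    · have hpv : p v = 0 := le_antisymm (not_lt.1 hv) (hp.1 v)
      have hπv : π v' v = 0 := by
        have h1 : π v' v ≤ ∑ v'', π v'' v :=
          Finset.single_le_sum (fun i _ => hπ0 i v) (Finset.mem_univ v')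
        rw [hcol v, hpv] at h1
        exact le_antisymm h1 (hπ0 _ _)
      simp [hv, hpv, hπv]

/-- The locality of the family gives the Hall-type condition. -/
lemma hall_of_local {V : Type} [Fintype V] (E : V → V → Prop) (hloop : ∀ v, E v v)
    (Ψ : ℕ → (V → ℝ) →ₗ[ℝ] (V → ℝ)) (hlocal : IsLocalFamily E Ψ)
    (p₀ : V → ℝ) (h0 : IsProbDist p₀) (t : ℕ) (X : Set V) :
    mass (Ψ (t+1) p₀) X ≤ mass (Ψ t p₀) {v | ∃ v' ∈ X, E v v'} := by
  classical
  have h := hlocal X p₀ h0 t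
  have hunion : mass (Ψ t p₀) X + mass (Ψ t p₀) (nbhd E X)
      = mass (Ψ t p₀) {v | ∃ v' ∈ X, E v v'} := by
    rw [mass, mass, mass, ← Finset.sum_add_distrib]
    refine Finset.sum_congr rfl fun v _ => ?_
    rw [Set.indicator_apply, Set.indicator_apply, Set.indicator_apply]
    by_cases hX : v ∈ X
    · have h1 : v ∉ nbhd E X := fun h => h.1 hX
      have h2 : v ∈ {v | ∃ v' ∈ X, E v v'} := ⟨v, hX, hloop v⟩
      simp [hX, h1, h2]
    · by_cases hN : v ∈ nbhd E X
      · have h2 : v ∈ {v | ∃ v' ∈ X, E v v'} := hN.2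
        simp [hX, hN, h2]
      · have h2 : v ∉ {v | ∃ v' ∈ X, E v v'} := by
          rintro ⟨v', hv', hE⟩
          exact hN ⟨hX, v', hv', hE⟩
        simp [hX, hN, h2]
  linarith

lemma pi_decomp {V : Type} [Fintype V] [DecidableEq V] (p : V → ℝ) :
    p = ∑ u, p u • (Pi.single u (1 : ℝ) : V → ℝ) := by
  funext x
  simp only [Finset.sum_apply, Pi.smul_apply, Pi.single_apply, smul_eq_mul,
    mul_ite, mul_one, mul_zero]
  simp

/-- any local family of stochastic linear maps can be simulated exactly,
up to any fixed time horizon `T`, by a lifted Markov chain with coin set of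
cardinality `|V|·(T+1)`. -/
theorem lmc_finite_horizon_simulation
    {V : Type} [Fintype V] (E : V → V → Prop) (hloop : ∀ v, E v v)
    (Ψ : ℕ → (V → ℝ) →ₗ[ℝ] (V → ℝ))
    (hΨ0 : Ψ 0 = LinearMap.id)
    (hΨstoch : ∀ (t : ℕ) (p : V → ℝ), IsProbDist p → IsProbDist (Ψ t p))
    (hlocal : IsLocalFamily E Ψ)
    (T : ℕ) :
    ∃ (P : Fin (Fintype.card V * (T+1)) × V → Fin (Fintype.card V * (T+1)) × V → ℝ)
      (ca : V → Fin (Fintype.card V * (T+1))),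
      IsStochastic P ∧ IsLocalLift E P ∧
      ∀ p : V → ℝ, IsProbDist p → ∀ t : ℕ, t ≤ T →
        margDist ((matVec P)^[t] (liftInit ca p)) = Ψ t p := by
  classical
  set C := Fin (Fintype.card V * (T+1)) with hC
  let e : V × Fin (T+1) ≃ C :=
    ((Fintype.equivFin V).prodCongr (Equiv.refl (Fin (T+1)))).trans finProdFinEquiv
  have hδ : ∀ u : V, IsProbDist (Pi.single u 1 : V → ℝ) := by
    intro u
    constructor
    · intro v; rw [Pi.single_apply]; split <;> norm_num
    · simp [Pi.single_apply, Finset.sum_ite_eq']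
  set q : V → ℕ → V → ℝ := fun u t => Ψ t (Pi.single u 1) with hqdef
  have hq : ∀ u t, IsProbDist (q u t) := fun u t => hΨstoch t _ (hδ u)
  have key : ∀ u t, ∃ M : V → V → ℝ, IsStochastic M ∧ IsLocalMatrix E M ∧
      matVec M (q u t) = q u (t+1) := fun u t =>
    step_matrix E hloop (q u t) (q u (t+1)) (hq u t) (hq u (t+1))
      (fun X => hall_of_local E hloop Ψ hlocal _ (hδ u) t X)
  choose M hMs hMl hMe using key
  set nxt : Fin (T+1) → Fin (T+1) :=
    fun s => if h : (s : ℕ) + 1 < T + 1 then ⟨(s : ℕ) + 1, h⟩ else s with hnxt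
  set P : C × V → C × V → ℝ := fun y x =>
    if y.1 = e ((e.symm x.1).1, nxt (e.symm x.1).2)
      then M (e.symm x.1).1 ((e.symm x.1).2 : ℕ) y.2 x.2 else 0 with hP
  set ca : V → C := fun v => e (v, (0 : Fin (T+1))) with hca
  have Pnonneg : ∀ y x, 0 ≤ P y x := by
    intro y x
    rw [hP]; dsimp only; split
    · exact (hMs _ _).1 _ _
    · exact le_rfl
  have Psum : ∀ x, ∑ y, P y x = 1 := by
    intro x
    rw [Fintype.sum_prod_type]
    have h1 : ∀ c' : C, (∑ v', P (c', v') x)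
        = if c' = e ((e.symm x.1).1, nxt (e.symm x.1).2) then 1 else 0 := by
      intro c'
      by_cases hc : c' = e ((e.symm x.1).1, nxt (e.symm x.1).2)
      · simp only [hP, hc, if_true]
        exact (hMs _ _).2 x.2
      · simp only [hP, hc, if_false]
        exact Finset.sum_eq_zero fun v' _ => rfl
    rw [Finset.sum_congr rfl fun c' _ => h1 c']
    rw [Finset.sum_ite_eq']; simp
  have Plocal : IsLocalLift E P := by
    intro c' v' c v hE
    rw [hP]; dsimp only
    rw [hMl _ _ _ _ hE, ite_self]
  have hq0 : ∀ u, q u 0 = Pi.single u 1 := by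
    intro u; rw [hqdef]; dsimp only; rw [hΨ0]; rfl
  -- main dynamics invariant
  have dyn : ∀ (p : V → ℝ) (t : ℕ), t ≤ T → (matVec P)^[t] (liftInit ca p) =
      fun x : C × V => if ((e.symm x.1).2 : ℕ) = t
        then p (e.symm x.1).1 * q (e.symm x.1).1 t x.2 else 0 := by
    intro p t
    induction t with
    | zero =>
      intro _
      funext x
      rw [Function.iterate_zero_apply]
      rw [liftInit]
      have hmem : x.1 = ca x.2 ↔ (e.symm x.1).1 = x.2 ∧ ((e.symm x.1).2 : ℕ) = 0 := by
        rw [hca]; dsimp only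
        rw [← Equiv.symm_apply_eq, Prod.ext_iff, Fin.ext_iff]
        simp
      rw [hq0]
      by_cases h0 : ((e.symm x.1).2 : ℕ) = 0
      · simp only [h0, if_true]
        by_cases hu : (e.symm x.1).1 = x.2
        · have : x.1 = ca x.2 := hmem.2 ⟨hu, h0⟩
          rw [if_pos this, hu, Pi.single_apply]
          simp
        · have : ¬ x.1 = ca x.2 := fun h => hu (hmem.1 h).1
          rw [if_neg this, Pi.single_apply]
          have : ¬ x.2 = (e.symm x.1).1 := fun h => hu h.symm
          simp [this]
      · have : ¬ x.1 = ca x.2 := fun h => h0 (hmem.1 h).2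
        simp [this, h0]
    | succ t ih =>
      intro ht
      have ht' : t ≤ T := Nat.le_of_succ_le ht
      have htT : t + 1 < T + 1 := Nat.succ_lt_succ (Nat.lt_of_succ_le ht)
      have htT0 : t < T + 1 := Nat.lt_of_lt_of_le (Nat.lt_succ_self t) (Nat.succ_le_succ ht')
      rw [Function.iterate_succ_apply', ih ht']
      funext y
      show (∑ x : C × V, P y x * _) = _
      rw [Fintype.sum_prod_type]
      rw [← Equiv.sum_comp e (fun c => ∑ v, P y (c, v) *
        (if ((e.symm c).2 : ℕ) = t then p (e.symm c).1 * q (e.symm c).1 t v else 0))]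
      rw [Fintype.sum_prod_type]
      set tF : Fin (T+1) := ⟨t, htT0⟩ with htF
      set t1F : Fin (T+1) := ⟨t+1, htT⟩ with ht1F
      have hnxtt : nxt tF = t1F := by
        rw [hnxt]; dsimp only; rw [dif_pos (by exact htT)]
      have hin : ∀ u : V, (∑ s : Fin (T+1), ∑ v : V, P y (e (u, s), v) *
          (if ((e.symm (e (u, s))).2 : ℕ) = t
            then p (e.symm (e (u, s))).1 * q (e.symm (e (u, s))).1 t v else 0))
          = if y.1 = e (u, t1F) then p u * q u (t+1) y.2 else 0 := by
        intro u
        rw [Finset.sum_eq_single tF]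
        · simp only [Equiv.symm_apply_apply]
          have : ((tF : Fin (T+1)) : ℕ) = t := rfl
          simp only [this, if_true, hP, hnxtt]
          simp only [Equiv.symm_apply_apply]
          rw [hnxtt]
          by_cases hy : y.1 = e (u, t1F)
          · simp only [hy, if_true]
            have := congrFun (hMe u t) y.2
            rw [matVec] at this
            rw [← this, Finset.mul_sum]
            refine Finset.sum_congr rfl fun v _ => ?_
            ring
          · simp only [hy, if_false]
            exact Finset.sum_eq_zero fun v _ => by ring
        · intro s _ hs
          refine Finset.sum_eq_zero fun v _ => ?_
          simp only [Equiv.symm_apply_apply]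
          have : ¬ ((s : Fin (T+1)) : ℕ) = t := by
            intro hsv
            exact hs (Fin.ext hsv)
          rw [if_neg this, mul_zero]
        · intro habs
          exact absurd (Finset.mem_univ tF) habs
      rw [Finset.sum_congr rfl fun u _ => hin u]
      have hcond : ∀ u : V, (y.1 = e (u, t1F)) ↔
          (u = (e.symm y.1).1 ∧ (e.symm y.1).2 = t1F) := by
        intro u
        rw [← Equiv.symm_apply_eq, Prod.ext_iff]
        constructor
        · rintro ⟨h1, h2⟩; exact ⟨h1.symm, h2⟩
        · rintro ⟨h1, h2⟩; exact ⟨h1.symm, h2⟩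
      by_cases hs' : (e.symm y.1).2 = t1F
      · have : ∀ u : V, (y.1 = e (u, t1F)) ↔ u = (e.symm y.1).1 := by
          intro u; rw [hcond u]; simp [hs']
        rw [Finset.sum_congr rfl fun u _ => by rw [if_congr (this u) rfl rfl]]
        rw [Finset.sum_ite_eq' Finset.univ ((e.symm y.1).1)
          (fun u => p u * q u (t+1) y.2)]
        have hval : ((e.symm y.1).2 : ℕ) = t + 1 := by rw [hs']
        simp [hval]
      · have : ∀ u : V, ¬ (y.1 = e (u, t1F)) := fun u h => hs' ((hcond u).1 h).2
        rw [Finset.sum_congr rfl fun u _ => by rw [if_neg (this u)]]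
        have hval : ¬ ((e.symm y.1).2 : ℕ) = t + 1 := by
          intro h; exact hs' (Fin.ext h)
        simp [hval]
  refine ⟨P, ca, ⟨Pnonneg, Psum⟩, Plocal, ?_⟩
  intro p hp t ht
  funext v
  rw [dyn p t ht]
  show (∑ c : C, if ((e.symm c).2 : ℕ) = t
      then p (e.symm c).1 * q (e.symm c).1 t v else 0) = Ψ t p v
  rw [← Equiv.sum_comp e (fun c => if ((e.symm c).2 : ℕ) = t
      then p (e.symm c).1 * q (e.symm c).1 t v else 0)]
  rw [Fintype.sum_prod_type]
  have htT0 : t < T + 1 := Nat.lt_succ_of_le ht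
  have hin : ∀ u : V, (∑ s : Fin (T+1), if ((e.symm (e (u, s))).2 : ℕ) = t
      then p (e.symm (e (u, s))).1 * q (e.symm (e (u, s))).1 t v else 0)
      = p u * q u t v := by
    intro u
    rw [Finset.sum_eq_single (⟨t, htT0⟩ : Fin (T+1))]
    · simp
    · intro s _ hs
      simp only [Equiv.symm_apply_apply]
      have : ¬ ((s : Fin (T+1)) : ℕ) = t := fun hsv => hs (Fin.ext hsv)
      rw [if_neg this]
    · intro habs
      exact absurd (Finset.mem_univ _) habs
  rw [Finset.sum_congr rfl fun u _ => hin u]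
  have : Ψ t p = ∑ u, p u • q u t := by
    conv_lhs => rw [pi_decomp p]
    rw [map_sum]
    exact Finset.sum_congr rfl fun u _ => by rw [map_smul]
  rw [this]
  simp [Finset.sum_apply]
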